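/- Let G be a cyclic group of prime-power order p^α. If G = MS is a complete splitting, then either |M| = 1 (and S = G) or |S| = 1 (and M is a complete set of residues modulo p^α). -/

import Mathlib

/-- Number of elements of `ZMod (p^α)` whose `val` is divisible by `p^k`. -/
lemma stmt5_Dcard (p α k : ℕ) [NeZero (p ^ α)] (hp : 1 < p) (hk : k ≤ α) :
    (Finset.univ.filter (fun x : ZMod (p ^ α) => p ^ k ∣ x.val)).card = p ^ (α - k) := by
  have hpk : 0 < p ^ k := pow_pos (by omega) k
  have hmul : p ^ (α - k) * p ^ k = p ^ α := by
    rw [← pow_add]; congr 1; omega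
  have hlt' : ∀ y < p ^ (α - k), p ^ k * y < p ^ α := by
    intro y hy
    calc p ^ k * y < p ^ k * p ^ (α - k) := (Nat.mul_lt_mul_left hpk).mpr hy
      _ = p ^ α := by rw [mul_comm]; exact hmul
  rw [← Finset.card_range (p ^ (α - k))]
  apply Finset.card_bij' (fun x _ => x.val / p ^ k)
      (fun y _ => ((p ^ k * y : ℕ) : ZMod (p ^ α)))
  · intro x hx
    simp only [Finset.mem_filter, Finset.mem_univ, true_and] at hx
    rw [Finset.mem_range, Nat.div_lt_iff_lt_mul hpk, hmul]
    exact ZMod.val_lt x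
  · intro y hy
    rw [Finset.mem_range] at hy
    simp only [Finset.mem_filter, Finset.mem_univ, true_and]
    rw [ZMod.val_natCast, Nat.mod_eq_of_lt (hlt' y hy)]
    exact Dvd.intro y rfl
  · intro x hx
    simp only [Finset.mem_filter, Finset.mem_univ, true_and] at hx
    rw [Nat.mul_div_cancel' hx]
    exact ZMod.natCast_rightInverse x
  · intro y hy
    rw [Finset.mem_range] at hy
    rw [ZMod.val_natCast, Nat.mod_eq_of_lt (hlt' y hy), Nat.mul_div_cancel_left y hpk]

lemma stmt5_arith (p i j : ℕ) (hp : 1 < p) (hi : 1 ≤ i) (hj : 1 ≤ j)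
    (h : (p ^ i - p ^ (i - 1)) * (p ^ j - p ^ (j - 1)) = p ^ (i + j) - p ^ (i + j - 1)) :
    False := by
  obtain ⟨i', rfl⟩ : ∃ i', i = i' + 1 := ⟨i - 1, by omega⟩
  obtain ⟨j', rfl⟩ : ∃ j', j = j' + 1 := ⟨j - 1, by omega⟩
  rw [show i' + 1 + (j' + 1) = i' + j' + 2 from by omega] at h
  rw [show i' + 1 - 1 = i' from by omega, show j' + 1 - 1 = j' from by omega,
    show i' + j' + 2 - 1 = i' + j' + 1 from by omega] at h
  have hsub1 : p ^ (i' + 1) - p ^ i' = p ^ i' * (p - 1) := by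
    rw [pow_succ, Nat.mul_sub]; simp
  have hsub2 : p ^ (j' + 1) - p ^ j' = p ^ j' * (p - 1) := by
    rw [pow_succ, Nat.mul_sub]; simp
  have hsub3 : p ^ (i' + j' + 2) - p ^ (i' + j' + 1) = p ^ (i' + j' + 1) * (p - 1) := by
    rw [show i' + j' + 2 = (i' + j' + 1) + 1 from rfl, pow_succ, Nat.mul_sub]; simp
  rw [hsub1, hsub2, hsub3] at h
  have hfin : p ^ (i' + j') * (p - 1) * (p - 1) = p ^ (i' + j') * p * (p - 1) := by
    calc p ^ (i' + j') * (p - 1) * (p - 1)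
        = p ^ i' * (p - 1) * (p ^ j' * (p - 1)) := by rw [pow_add]; ring
      _ = p ^ (i' + j' + 1) * (p - 1) := h
      _ = p ^ (i' + j') * p * (p - 1) := by rw [pow_succ]
  have hcan : p ^ (i' + j') * ((p - 1) * (p - 1)) = p ^ (i' + j') * (p * (p - 1)) := by
    rw [← mul_assoc, ← mul_assoc]; exact hfin
  have h5 := Nat.eq_of_mul_eq_mul_left (pow_pos (by omega) _) hcan
  have h6 := Nat.eq_of_mul_eq_mul_right (show 0 < p - 1 by omega) h5
  omega


theorem stmt_5 (p : ℕ) (hp : p.Prime) (α : ℕ) (hα : 0 < α)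
    (M : Finset ℤ) (S : Finset (ZMod (p ^ α)))
    (hCS : ∀ x : ZMod (p ^ α), ∃! q : ℤ × ZMod (p ^ α),
      q.1 ∈ M ∧ q.2 ∈ S ∧ q.1 • q.2 = x) :
    (M.card = 1 ∧ ∀ x : ZMod (p ^ α), x ∈ S) ∨
    (S.card = 1 ∧ ∀ r : ZMod (p ^ α), ∃! m : ℤ, m ∈ M ∧ (m : ZMod (p ^ α)) = r) := by
  classical
  have hp1 : 1 < p := hp.one_lt
  have hn1 : 1 < p ^ α := Nat.one_lt_pow hα.ne' hp1
  have hn0 : p ^ α ≠ 0 := by omega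
  haveI : NeZero (p ^ α) := ⟨hn0⟩
  have hCS' : ∀ x : ZMod (p ^ α), ∃! q : ℤ × ZMod (p ^ α),
      q.1 ∈ M ∧ q.2 ∈ S ∧ (q.1 : ZMod (p ^ α)) * q.2 = x := by
    intro x
    obtain ⟨q, ⟨h1, h2, h3⟩, hu⟩ := hCS x
    refine ⟨q, ⟨h1, h2, by rw [← zsmul_eq_mul]; exact h3⟩, ?_⟩
    intro q' ⟨h1', h2', h3'⟩
    exact hu q' ⟨h1', h2', by rw [zsmul_eq_mul]; exact h3'⟩
  have huniq : ∀ {m m' : ℤ} {s s' : ZMod (p ^ α)}, m ∈ M → m' ∈ M → s ∈ S → s' ∈ S →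
      (m : ZMod (p ^ α)) * s = (m' : ZMod (p ^ α)) * s' → m = m' ∧ s = s' := by
    intro m m' s s' hm hm' hs hs' h
    obtain ⟨q, _, hu⟩ := hCS' ((m : ZMod (p ^ α)) * s)
    have h1 := hu (m, s) ⟨hm, hs, rfl⟩
    have h2 := hu (m', s') ⟨hm', hs', h.symm⟩
    have := h1.trans h2.symm
    exact ⟨congrArg Prod.fst this, congrArg Prod.snd this⟩
  -- key counting principle
  have key : ∀ (P : ZMod (p ^ α) → Prop) [DecidablePred P],
      ((M ×ˢ S).filter (fun q => P ((q.1 : ZMod (p ^ α)) * q.2))).card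
        = (Finset.univ.filter P).card := by
    intro P _
    apply Finset.card_bij (fun q _ => (q.1 : ZMod (p ^ α)) * q.2)
    · intro q hq
      simp only [Finset.mem_filter] at hq ⊢
      exact ⟨Finset.mem_univ _, hq.2⟩
    · intro q hq q' hq' h
      simp only [Finset.mem_filter, Finset.mem_product] at hq hq'
      have := huniq hq.1.1 hq'.1.1 hq.1.2 hq'.1.2 h
      exact Prod.ext this.1 this.2
    · intro x hx
      simp only [Finset.mem_filter, Finset.mem_univ, true_and] at hx
      obtain ⟨q, ⟨h1, h2, h3⟩, _⟩ := hCS' x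
      refine ⟨q, ?_, h3⟩
      simp only [Finset.mem_filter, Finset.mem_product, h3]
      exact ⟨⟨h1, h2⟩, hx⟩
  have htot : M.card * S.card = p ^ α := by
    have := key (fun _ => True)
    simp only [Finset.filter_true] at this
    rw [← Finset.card_product, this, Finset.card_univ, ZMod.card]
  -- main dichotomy
  have hdi : M.card = 1 ∨ S.card = 1 := by
    by_contra hcon
    push_neg at hcon
    obtain ⟨hM1, hS1⟩ := hcon
    have hMpos : 0 < M.card := by
      rcases Nat.eq_zero_or_pos M.card with h | h
      · rw [h, zero_mul] at htot; omega
      · exact h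
    have hSpos : 0 < S.card := by
      rcases Nat.eq_zero_or_pos S.card with h | h
      · rw [h, mul_zero] at htot; omega
      · exact h
    have hM2 : 1 < M.card := by omega
    have hS2 : 1 < S.card := by omega
    -- no element maps to zero
    have hM0 : ∀ m ∈ M, (m : ZMod (p ^ α)) ≠ 0 := by
      intro m hm h0
      obtain ⟨s, hs, s', hs', hne⟩ := Finset.one_lt_card.mp hS2
      have : (m : ZMod (p ^ α)) * s = (m : ZMod (p ^ α)) * s' := by
        rw [h0, zero_mul, zero_mul]
      exact hne (huniq hm hm hs hs' this).2
    have hS0 : ∀ s ∈ S, s ≠ 0 := by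
      intro s hs h0
      obtain ⟨m, hm, m', hm', hne⟩ := Finset.one_lt_card.mp hM2
      have : (m : ZMod (p ^ α)) * s = (m' : ZMod (p ^ α)) * s := by
        rw [h0, mul_zero, mul_zero]
      exact hne (huniq hm hm' hs hs this).1
    have hMval : ∀ m ∈ M, (m : ZMod (p ^ α)).val ≠ 0 := fun m hm h =>
      hM0 m hm ((ZMod.val_eq_zero _).mp h)
    have hSval : ∀ s ∈ S, s.val ≠ 0 := fun s hs h =>
      hS0 s hs ((ZMod.val_eq_zero _).mp h)
    -- maxima of p-adic valuations
    obtain ⟨ms, hms, hmax⟩ := Finset.exists_max_image M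
      (fun m => ((m : ZMod (p ^ α)).val).factorization p) (Finset.card_pos.mp hMpos)
    obtain ⟨ss, hss, hsmax⟩ := Finset.exists_max_image S
      (fun s => (s.val).factorization p) (Finset.card_pos.mp hSpos)
    set i := ((ms : ZMod (p ^ α)).val).factorization p with hi_def
    set j := ((ss).val).factorization p with hj_def
    have hvd : ∀ m ∈ M, p ^ ((m : ZMod (p ^ α)).val.factorization p) ∣ (m : ZMod (p ^ α)).val :=
      fun m _ => Nat.ordProj_dvd _ p
    have hvds : ∀ s ∈ S, p ^ (s.val.factorization p) ∣ s.val :=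
      fun s _ => Nat.ordProj_dvd _ p
    have hiα : i < α := by
      have h1 : p ^ i ≤ (ms : ZMod (p ^ α)).val := Nat.le_of_dvd
        (Nat.pos_of_ne_zero (hMval ms hms)) (hvd ms hms)
      have h2 : (ms : ZMod (p ^ α)).val < p ^ α := ZMod.val_lt _
      exact (Nat.pow_lt_pow_iff_right hp1).mp (lt_of_le_of_lt h1 h2)
    have hjα : j < α := by
      have h1 : p ^ j ≤ (ss).val := Nat.le_of_dvd
        (Nat.pos_of_ne_zero (hSval ss hss)) (hvds ss hss)
      have h2 : (ss).val < p ^ α := ZMod.val_lt _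
      exact (Nat.pow_lt_pow_iff_right hp1).mp (lt_of_le_of_lt h1 h2)
    -- zero is represented: α ≤ i + j
    have hijα : α ≤ i + j := by
      obtain ⟨⟨m₀, s₀⟩, ⟨hm₀, hs₀, h0⟩, _⟩ := hCS' 0
      have hc : (m₀ : ZMod (p ^ α)).val ≠ 0 := hMval m₀ hm₀
      have hd : s₀.val ≠ 0 := hSval s₀ hs₀
      have hmod : (m₀ : ZMod (p ^ α)).val * s₀.val % p ^ α = 0 := by
        rw [← ZMod.val_mul, h0, ZMod.val_zero]
      have hdvd : p ^ α ∣ (m₀ : ZMod (p ^ α)).val * s₀.val :=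
        Nat.dvd_of_mod_eq_zero hmod
      have := (hp.pow_dvd_iff_le_factorization (Nat.mul_ne_zero hc hd)).mp hdvd
      rw [Nat.factorization_mul hc hd, Finsupp.add_apply] at this
      calc α ≤ (m₀ : ZMod (p ^ α)).val.factorization p + s₀.val.factorization p := this
        _ ≤ i + j := Nat.add_le_add (hmax m₀ hm₀) (hsmax s₀ hs₀)
    -- injectivity of multiplication by fixed elements
    have hinjM : ∀ m ∈ M, ∀ m' ∈ M,
        (m : ZMod (p ^ α)) * ss = (m' : ZMod (p ^ α)) * ss → m = m' :=
      fun m hm m' hm' h => (huniq hm hm' hss hss h).1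
    have hinjS : ∀ s ∈ S, ∀ s' ∈ S,
        (ms : ZMod (p ^ α)) * s = (ms : ZMod (p ^ α)) * s' → s = s' :=
      fun s hs s' hs' h => (huniq hms hms hs hs' h).2
    -- products land in divisibility classes
    have hmemDj : ∀ m ∈ M, p ^ j ∣ ((m : ZMod (p ^ α)) * ss).val := by
      intro m hm
      rw [ZMod.val_mul, Nat.dvd_mod_iff (pow_dvd_pow p hjα.le)]
      exact Dvd.dvd.mul_left (hvds ss hss) _
    have hmemDi : ∀ s ∈ S, p ^ i ∣ ((ms : ZMod (p ^ α)) * s).val := by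
      intro s hs
      rw [ZMod.val_mul, Nat.dvd_mod_iff (pow_dvd_pow p hiα.le)]
      exact Dvd.dvd.mul_right (hvd ms hms) _
    -- cardinality bounds
    have hMcard : M.card ≤ p ^ (α - j) := by
      rw [← stmt5_Dcard p α j hp1 hjα.le]
      apply Finset.card_le_card_of_injOn (fun (m : ℤ) => (m : ZMod (p ^ α)) * ss)
      · intro m hm
        simp only [Finset.mem_filter, Finset.mem_univ, true_and]
        simpa using hmemDj m hm
      · intro m hm m' hm' h
        exact hinjM m hm m' hm' h
    have hScard : S.card ≤ p ^ (α - i) := by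
      rw [← stmt5_Dcard p α i hp1 hiα.le]
      apply Finset.card_le_card_of_injOn (fun (s : ZMod (p ^ α)) => (ms : ZMod (p ^ α)) * s)
      · intro s hs
        simp only [Finset.mem_filter, Finset.mem_univ, true_and]
        simpa using hmemDi s hs
      · intro s hs s' hs' h
        exact hinjS s hs s' hs' h
    -- forcing equalities
    have hexp : (α - j) + (α - i) = α := by
      have h1 : p ^ α ≤ p ^ (α - j) * p ^ (α - i) :=
        htot ▸ Nat.mul_le_mul hMcard hScard
      rw [← pow_add] at h1
      have h2 : (α - j) + (α - i) ≤ α := by omega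
      have h3 : p ^ ((α - j) + (α - i)) ≤ p ^ α := Nat.pow_le_pow_right (by omega) h2
      exact Nat.pow_right_injective hp1 (le_antisymm h3 h1)
    have hij : i + j = α := by omega
    have hMc : M.card = p ^ (α - j) := by
      have h1 : p ^ (α - j) * p ^ (α - i) = p ^ α := by rw [← pow_add, hexp]
      have h2 : M.card * S.card ≤ M.card * p ^ (α - i) := Nat.mul_le_mul_left _ hScard
      have h3 : M.card * p ^ (α - i) ≤ p ^ (α - j) * p ^ (α - i) :=
        Nat.mul_le_mul_right _ hMcard
      have : M.card * p ^ (α - i) = p ^ (α - j) * p ^ (α - i) := by omega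
      exact Nat.eq_of_mul_eq_mul_right (pow_pos (by omega) _) this
    have hSc : S.card = p ^ (α - i) := by
      have h1 : p ^ (α - j) * p ^ (α - i) = p ^ α := by rw [← pow_add, hexp]
      have h2 : M.card * S.card ≤ p ^ (α - j) * S.card := Nat.mul_le_mul_right _ hMcard
      have h3 : p ^ (α - j) * S.card ≤ p ^ (α - j) * p ^ (α - i) :=
        Nat.mul_le_mul_left _ hScard
      have : p ^ (α - j) * S.card = p ^ (α - j) * p ^ (α - i) := by omega
      exact Nat.eq_of_mul_eq_mul_left (pow_pos (by omega) _) this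
    have hi1 : 1 ≤ i := by
      by_contra h
      push_neg at h
      interval_cases i
      have hz : α - j = 0 := by omega
      rw [hz, pow_zero] at hMc
      omega
    have hj1 : 1 ≤ j := by
      by_contra h
      push_neg at h
      interval_cases j
      have hz : α - i = 0 := by omega
      rw [hz, pow_zero] at hSc
      omega
    -- unit-detection through multiplication by ss (resp. ms)
    have hvss : ¬ p ^ (j + 1) ∣ (ss).val :=
      Nat.pow_succ_factorization_not_dvd (hSval ss hss) hp
    have hvms : ¬ p ^ (i + 1) ∣ (ms : ZMod (p ^ α)).val :=
      Nat.pow_succ_factorization_not_dvd (hMval ms hms) hp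
    have hiffM : ∀ m ∈ M,
        (p ∣ (m : ZMod (p ^ α)).val ↔ p ^ (j + 1) ∣ ((m : ZMod (p ^ α)) * ss).val) := by
      intro m hm
      have hj1α : j + 1 ≤ α := by omega
      rw [ZMod.val_mul, Nat.dvd_mod_iff (pow_dvd_pow p hj1α)]
      constructor
      · intro hpc
        rw [pow_succ, mul_comm (p ^ j) p]
        exact mul_dvd_mul hpc (hvds ss hss)
      · intro hdvd
        have hc : (m : ZMod (p ^ α)).val ≠ 0 := hMval m hm
        have hd : (ss).val ≠ 0 := hSval ss hss
        have hle := (hp.pow_dvd_iff_le_factorization (Nat.mul_ne_zero hc hd)).mp hdvd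
        rw [Nat.factorization_mul hc hd, Finsupp.add_apply] at hle
        have : 1 ≤ (m : ZMod (p ^ α)).val.factorization p := by
          have : (ss).val.factorization p = j := rfl
          omega
        have := (hp.pow_dvd_iff_le_factorization hc).mpr this
        rwa [pow_one] at this
    have hiffS : ∀ s ∈ S,
        (p ∣ s.val ↔ p ^ (i + 1) ∣ ((ms : ZMod (p ^ α)) * s).val) := by
      intro s hs
      have hi1α : i + 1 ≤ α := by omega
      rw [ZMod.val_mul, Nat.dvd_mod_iff (pow_dvd_pow p hi1α)]
      constructor
      · intro hpc
        rw [pow_succ]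
        exact mul_dvd_mul (hvd ms hms) hpc
      · intro hdvd
        have hc : (ms : ZMod (p ^ α)).val ≠ 0 := hMval ms hms
        have hd : s.val ≠ 0 := hSval s hs
        have hle := (hp.pow_dvd_iff_le_factorization (Nat.mul_ne_zero hc hd)).mp hdvd
        rw [Nat.factorization_mul hc hd, Finsupp.add_apply] at hle
        have : 1 ≤ s.val.factorization p := by
          have : (ms : ZMod (p ^ α)).val.factorization p = i := rfl
          omega
        have := (hp.pow_dvd_iff_le_factorization hd).mpr this
        rwa [pow_one] at this
    -- counting elements of M coprime to p
    have hDsub : ∀ k : ℕ, (Finset.univ.filter (fun x : ZMod (p ^ α) => p ^ (k + 1) ∣ x.val))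
        ⊆ (Finset.univ.filter (fun x : ZMod (p ^ α) => p ^ k ∣ x.val)) := by
      intro k x hx
      simp only [Finset.mem_filter, Finset.mem_univ, true_and] at hx ⊢
      exact dvd_trans (pow_dvd_pow p (Nat.le_succ k)) hx
    have hMfilter : (M.filter (fun m : ℤ => ¬ p ∣ (m : ZMod (p ^ α)).val)).card
        = p ^ (α - j) - p ^ (α - (j + 1)) := by
      have hj1α : j + 1 ≤ α := by omega
      have hEcard : ((Finset.univ.filter (fun x : ZMod (p ^ α) => p ^ j ∣ x.val)) \
          (Finset.univ.filter (fun x : ZMod (p ^ α) => p ^ (j + 1) ∣ x.val))).card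
          = p ^ (α - j) - p ^ (α - (j + 1)) := by
        rw [Finset.card_sdiff_of_subset (hDsub j), stmt5_Dcard p α j hp1 hjα.le,
          stmt5_Dcard p α (j + 1) hp1 hj1α]
      rw [← hEcard]
      -- surjectivity of m ↦ m * ss onto the divisibility class
      have hsurj : ∀ x ∈ Finset.univ.filter (fun x : ZMod (p ^ α) => p ^ j ∣ x.val),
          ∃ m, ∃ hm : m ∈ M, x = (m : ZMod (p ^ α)) * ss := by
        apply Finset.surj_on_of_inj_on_of_card_le (fun (m : ℤ) (_ : m ∈ M) => (m : ZMod (p ^ α)) * ss)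
        · intro m hm
          simp only [Finset.mem_filter, Finset.mem_univ, true_and]
          exact hmemDj m hm
        · intro m m' hm hm' h
          exact hinjM m hm m' hm' h
        · rw [stmt5_Dcard p α j hp1 hjα.le, hMc]
      apply Finset.card_bij (fun (m : ℤ) (_ : m ∈ M.filter (fun m : ℤ => ¬ p ∣ (m : ZMod (p ^ α)).val)) => (m : ZMod (p ^ α)) * ss)
      · intro m hm
        simp only [Finset.mem_filter] at hm
        simp only [Finset.mem_sdiff, Finset.mem_filter, Finset.mem_univ, true_and]
        exact ⟨hmemDj m hm.1, fun h => hm.2 ((hiffM m hm.1).mpr h)⟩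
      · intro m hm m' hm' h
        simp only [Finset.mem_filter] at hm hm'
        exact hinjM m hm.1 m' hm'.1 h
      · intro x hx
        simp only [Finset.mem_sdiff, Finset.mem_filter, Finset.mem_univ, true_and] at hx
        obtain ⟨m, hm, hxeq⟩ := hsurj x (by
          simp only [Finset.mem_filter, Finset.mem_univ, true_and]; exact hx.1)
        refine ⟨m, ?_, hxeq.symm⟩
        simp only [Finset.mem_filter]
        refine ⟨hm, fun hpc => hx.2 ?_⟩
        rw [hxeq]
        exact (hiffM m hm).mp hpc
    have hSfilter : (S.filter (fun s => ¬ p ∣ s.val)).card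
        = p ^ (α - i) - p ^ (α - (i + 1)) := by
      have hi1α : i + 1 ≤ α := by omega
      have hEcard : ((Finset.univ.filter (fun x : ZMod (p ^ α) => p ^ i ∣ x.val)) \
          (Finset.univ.filter (fun x : ZMod (p ^ α) => p ^ (i + 1) ∣ x.val))).card
          = p ^ (α - i) - p ^ (α - (i + 1)) := by
        rw [Finset.card_sdiff_of_subset (hDsub i), stmt5_Dcard p α i hp1 hiα.le,
          stmt5_Dcard p α (i + 1) hp1 hi1α]
      rw [← hEcard]
      have hsurj : ∀ x ∈ Finset.univ.filter (fun x : ZMod (p ^ α) => p ^ i ∣ x.val),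
          ∃ s, ∃ hs : s ∈ S, x = (ms : ZMod (p ^ α)) * s := by
        apply Finset.surj_on_of_inj_on_of_card_le (fun (s : ZMod (p ^ α)) (_ : s ∈ S) => (ms : ZMod (p ^ α)) * s)
        · intro s hs
          simp only [Finset.mem_filter, Finset.mem_univ, true_and]
          exact hmemDi s hs
        · intro s s' hs hs' h
          exact hinjS s hs s' hs' h
        · rw [stmt5_Dcard p α i hp1 hiα.le, hSc]
      apply Finset.card_bij (fun (s : ZMod (p ^ α)) (_ : s ∈ S.filter (fun s => ¬ p ∣ s.val)) => (ms : ZMod (p ^ α)) * s)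
      · intro s hs
        simp only [Finset.mem_filter] at hs
        simp only [Finset.mem_sdiff, Finset.mem_filter, Finset.mem_univ, true_and]
        exact ⟨hmemDi s hs.1, fun h => hs.2 ((hiffS s hs.1).mpr h)⟩
      · intro s hs s' hs' h
        simp only [Finset.mem_filter] at hs hs'
        exact hinjS s hs.1 s' hs'.1 h
      · intro x hx
        simp only [Finset.mem_sdiff, Finset.mem_filter, Finset.mem_univ, true_and] at hx
        obtain ⟨s, hs, hxeq⟩ := hsurj x (by
          simp only [Finset.mem_filter, Finset.mem_univ, true_and]; exact hx.1)
        refine ⟨s, ?_, hxeq.symm⟩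
        simp only [Finset.mem_filter]
        refine ⟨hs, fun hpc => hx.2 ?_⟩
        rw [hxeq]
        exact (hiffS s hs).mp hpc
    -- counting units via the splitting
    have hunits : (M.filter (fun m : ℤ => ¬ p ∣ (m : ZMod (p ^ α)).val)).card *
        (S.filter (fun s => ¬ p ∣ s.val)).card = p ^ α - p ^ (α - 1) := by
      have h1 := key (fun x => ¬ p ∣ x.val)
      have h2 : ((M ×ˢ S).filter (fun q : ℤ × ZMod (p ^ α) =>
          ¬ p ∣ ((q.1 : ZMod (p ^ α)) * q.2).val))
          = (M.filter (fun m : ℤ => ¬ p ∣ (m : ZMod (p ^ α)).val)) ×ˢ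
            (S.filter (fun s => ¬ p ∣ s.val)) := by
        rw [← Finset.filter_product]
        apply Finset.filter_congr
        intro q hq
        rw [Finset.mem_product] at hq
        have hpn : p ∣ p ^ α := dvd_pow_self p hα.ne'
        rw [ZMod.val_mul, Nat.dvd_mod_iff hpn, hp.dvd_mul]
        tauto
      have h3 : (Finset.univ.filter (fun x : ZMod (p ^ α) => ¬ p ∣ x.val)).card
          = p ^ α - p ^ (α - 1) := by
        rw [Finset.filter_not, Finset.card_sdiff_of_subset (Finset.filter_subset _ _)]
        have : (Finset.univ.filter (fun x : ZMod (p ^ α) => p ∣ x.val)).card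
            = p ^ (α - 1) := by
          have := stmt5_Dcard p α 1 hp1 hα
          rwa [pow_one] at this
        rw [this, Finset.card_univ, ZMod.card]
      rw [h2, Finset.card_product] at h1
      rw [h1, h3]
    -- final arithmetic contradiction
    rw [hMfilter, hSfilter] at hunits
    have e1 : α - j = i := by omega
    have e2 : α - (j + 1) = i - 1 := by omega
    have e3 : α - i = j := by omega
    have e4 : α - (i + 1) = j - 1 := by omega
    rw [e1, e2, e3, e4] at hunits
    rw [show α = i + j from by omega] at hunits
    exact stmt5_arith p i j hp1 hi1 hj1 hunits
  -- conclude from dichotomy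
  rcases hdi with hM | hS
  · left
    refine ⟨hM, ?_⟩
    have hc : S.card = Fintype.card (ZMod (p ^ α)) := by
      rw [ZMod.card]; rw [hM, one_mul] at htot; exact htot
    have he := Finset.eq_univ_of_card S hc
    intro x; rw [he]; exact Finset.mem_univ x
  · right
    refine ⟨hS, ?_⟩
    obtain ⟨s, hSs⟩ := Finset.card_eq_one.mp hS
    have hsmem : s ∈ S := by rw [hSs]; exact Finset.mem_singleton_self s
    have hsu : IsUnit s := by
      obtain ⟨⟨m₁, s₁⟩, ⟨hm₁, hs₁, h1⟩, _⟩ := hCS' 1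
      have he : s₁ = s := by rw [hSs] at hs₁; exact Finset.mem_singleton.mp hs₁
      rw [he] at h1
      exact IsUnit.of_mul_eq_one (a := s) (m₁ : ZMod (p ^ α)) (by rw [mul_comm]; exact h1)
    intro r
    obtain ⟨⟨m, s'⟩, ⟨hm, hs', heq⟩, hu⟩ := hCS' (r * s)
    have hs's : s' = s := by rw [hSs] at hs'; exact Finset.mem_singleton.mp hs'
    rw [hs's] at heq
    refine ⟨m, ⟨hm, ?_⟩, ?_⟩
    · exact hsu.mul_left_cancel (by rw [mul_comm s _, mul_comm s r]; exact heq)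
    · intro m' ⟨hm', hr⟩
      have heq2 : (m', s) = (m, s') := hu (m', s) ⟨hm', hsmem, by rw [hr]⟩
      exact congrArg Prod.fst heq2
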